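/- If h is the set-driven learner defined by h(D) = e₀ (a fixed index for 2ℕ) when D ⊆ 2ℕ and h(D) = p(min(D \ 2ℕ)) otherwise, where p is total computable with W_{p(2k+1)} = {0,2,…,2k,2k+1} for all k, then on any text T of any language L ∈ {2ℕ} ∪ {L_{2k+1} : k ∈ ℕ}, the hypothesis sequence n ↦ h(content(T[n])) changes its value at most once, and the single mind change (if it occurs) goes from an index of 2ℕ to an index of some L_{2k+1} with content(T[n]) ⊆ L_{2k+1}; hence the learning is monotone. -/

import Mathlib

/-- The `e`-th computably enumerable set: the domain of the `e`-th partial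
computable function in the standard numbering of `Nat.Partrec.Code`. -/
def Wset (e : ℕ) : Set ℕ := {x | ((Denumerable.ofNat Nat.Partrec.Code e).eval x).Dom}

/-- A text: a function from ℕ to ℕ ∪ {#}, with `none` playing the role of the pause symbol #. -/
def Text := ℕ → Option ℕ

/-- The content of a text: its range without the pause symbol. -/
def content (T : Text) : Set ℕ := {x | ∃ n, T n = some x}

/-- The initial segment `T[n]` of a text, as a finite sequence over ℕ ∪ {#}. -/
def seg (T : Text) (n : ℕ) : List (Option ℕ) := (List.range n).map T

/-- The content of a finite sequence over ℕ ∪ {#}. -/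
def contentSeg (l : List (Option ℕ)) : Set ℕ := {x | (some x) ∈ l}

/-- The content of `T[n]` as a finite set. -/
def fset (T : Text) (n : ℕ) : Finset ℕ := ((List.range n).map T).reduceOption.toFinset

/-- The language L_{2k+1} = {0, 2, 4, …, 2k, 2k+1}. -/
def Lodd (k : ℕ) : Set ℕ := {n | (Even n ∧ n ≤ 2 * k) ∨ n = 2 * k + 1}

/-- The even numbers 2ℕ. -/
def Ev : Set ℕ := {n | Even n}

/-- The class {2ℕ} ∪ { L_{2k+1} : k ∈ ℕ }. -/
def sepClass : Set (Set ℕ) := insert Ev {L | ∃ k : ℕ, L = Lodd k}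

lemma mem_fset {T : Text} {n x : ℕ} : x ∈ fset T n ↔ ∃ m < n, T m = some x := by
  simp [fset, List.reduceOption_mem_iff]
  exact List.mem_map.trans (by simp [List.mem_range])

lemma fset_mono {T : Text} {n m : ℕ} (hnm : n ≤ m) : fset T n ⊆ fset T m := by
  intro x hx
  rw [mem_fset] at *
  obtain ⟨i, hi, hi'⟩ := hx
  exact ⟨i, lt_of_lt_of_le hi hnm, hi'⟩

lemma fset_subset_content (T : Text) (n : ℕ) : ↑(fset T n) ⊆ content T := by
  intro x hx
  rw [Finset.mem_coe, mem_fset] at hx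
  obtain ⟨m, _, hm⟩ := hx
  exact ⟨m, hm⟩

/-- the set-driven learner h with h(D) = e₀ for D ⊆ 2ℕ and
h(D) = p(min(D \ 2ℕ)) otherwise changes its hypothesis at most once on any text of a
language of the class {2ℕ} ∪ {L_{2k+1}}, the single mind change (if any) going from the
index e₀ of 2ℕ to an index p(2k+1) of some L_{2k+1} containing the content seen so far;
hence the learning is monotone. -/
theorem sepClass_learner_one_mind_change (e₀ : ℕ) (p : ℕ → ℕ) (h : Finset ℕ → ℕ)
    (he₀ : Wset e₀ = Ev) (hp : ∀ k : ℕ, Wset (p (2 * k + 1)) = Lodd k)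
    (hEven : ∀ D : Finset ℕ, (∀ x ∈ D, Even x) → h D = e₀)
    (hOdd : ∀ (D : Finset ℕ) (x : ℕ), x ∈ D → ¬ Even x →
      (∀ y ∈ D, ¬ Even y → x ≤ y) → h D = p x) :
    ∀ L ∈ sepClass, ∀ T : Text, content T = L →
      ((∀ n : ℕ, h (fset T n) = e₀) ∨
        ∃ n₁ k : ℕ, (∀ n < n₁, h (fset T n) = e₀) ∧
          (∀ n ≥ n₁, h (fset T n) = p (2 * k + 1)) ∧
          ↑(fset T n₁) ⊆ Lodd k) ∧
      (∀ i j : ℕ, i ≤ j →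
        Wset (h (fset T i)) ∩ content T ⊆ Wset (h (fset T j)) ∩ content T) := by
  intro L hL T hT
  rcases hL with rfl | ⟨k, rfl⟩
  · have hall : ∀ n, h (fset T n) = e₀ := by
      intro n
      apply hEven
      intro x hx
      have := fset_subset_content T n hx
      rw [hT] at this
      exact this
    refine ⟨Or.inl hall, fun i j _ => ?_⟩
    rw [hall i, hall j]
  · have h2k1 : (2 * k + 1) ∈ content T := by rw [hT]; exact Or.inr rfl
    obtain ⟨m, hm⟩ := h2k1
    have Hex : ∃ n, 2 * k + 1 ∈ fset T n := ⟨m + 1, mem_fset.mpr ⟨m, Nat.lt_succ_self m, hm⟩⟩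
    set n₁ := Nat.find Hex with hn₁
    have oddeq : ∀ n x, x ∈ fset T n → ¬ Even x → x = 2 * k + 1 := by
      intro n x hx hodd
      have hx' : x ∈ Lodd k := by rw [← hT]; exact fset_subset_content T n hx
      rcases hx' with ⟨he, _⟩ | h'
      · exact absurd he hodd
      · exact h'
    have hbefore : ∀ n < n₁, h (fset T n) = e₀ := by
      intro n hn
      apply hEven
      intro x hx
      by_contra hodd
      rw [oddeq n x hx hodd] at hx
      exact Nat.find_min Hex hn hx
    have hodd21 : ¬ Even (2 * k + 1) := by
      simp [Nat.even_add_one, parity_simps]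
    have hafter : ∀ n ≥ n₁, h (fset T n) = p (2 * k + 1) := by
      intro n hn
      have hmem : 2 * k + 1 ∈ fset T n := fset_mono hn (Nat.find_spec Hex)
      apply hOdd _ _ hmem hodd21
      intro y hy hoy
      rw [oddeq n y hy hoy]
    constructor
    · refine Or.inr ⟨n₁, k, hbefore, hafter, ?_⟩
      intro x hx
      rw [← hT]
      exact fset_subset_content T n₁ hx
    · intro i j hij
      rcases lt_or_ge i n₁ with hi | hi
      · rcases lt_or_ge j n₁ with hj | hj
        · rw [hbefore i hi, hbefore j hj]
        · rw [hbefore i hi, hafter j hj, he₀, hp, hT]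
          rintro x ⟨_, hx2⟩
          exact ⟨hx2, hx2⟩
      · rw [hafter i hi, hafter j (le_trans hi hij)]
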